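/- Let Σ₁, Σ₂ ∈ ℝ^{p×p} be symmetric with Λ(k; Σ₂) > 0, Γ₁, Γ₂ ∈ ℝ^p, and let k ≥ 1 be an integer such that k · |||Σ₁ − Σ₂|||_∞ < Λ(k; Σ₂). Then sup_{M∈𝓜(k)} ‖β_M(Σ₁, Γ₁) − β_M(Σ₂, Γ₂)‖₂ ≤ [k^{1/2} ‖Γ₁ − Γ₂‖_∞ + k · |||Σ₁ − Σ₂|||_∞ · S_{2,k}(Σ₂, Γ₂)] / [Λ(k; Σ₂) − k · |||Σ₁ − Σ₂|||_∞]. -/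

import Mathlib

open scoped BigOperators
open MeasureTheory ProbabilityTheory Real Matrix

noncomputable section

/-- The Euclidean (`ℓ₂`) norm of a finitely indexed real vector. -/
def norm2 {ι : Type*} [Fintype ι] (v : ι → ℝ) : ℝ := Real.sqrt (∑ i, (v i) ^ 2)

/-- The `ℓ₁` norm of a finitely indexed real vector. -/
def norm1 {ι : Type*} [Fintype ι] (v : ι → ℝ) : ℝ := ∑ i, |v i|

/-- The `ℓ₂ → ℓ₂` operator norm of a square real matrix. -/
def opNorm {ι : Type*} [Fintype ι] (A : Matrix ι ι ℝ) : ℝ :=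
  sSup {r | ∃ x : ι → ℝ, norm2 x ≤ 1 ∧ r = norm2 (A.mulVec x)}

/-- The collection of models: nonempty subsets of `{1, …, p}` of cardinality at most `k`. -/
def Models (p k : ℕ) : Set (Finset (Fin p)) := {M | 1 ≤ M.card ∧ M.card ≤ k}

/-- The subvector of `v` with indices in the model `M`. -/
def subv {p : ℕ} (v : Fin p → ℝ) (M : Finset (Fin p)) : {x // x ∈ M} → ℝ := fun i => v i.1

/-- The submatrix of `A` with row and column indices in the model `M`. -/
def subm {p : ℕ} (A : Matrix (Fin p) (Fin p) ℝ) (M : Finset (Fin p)) :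
    Matrix {x // x ∈ M} {x // x ∈ M} ℝ := fun i j => A i.1 j.1

/-- `RIP(k, A)`: the maximal `k`-sparse operator norm `sup_{M ∈ 𝓜(k)} ‖A(M)‖_op`. -/
def RIP {p : ℕ} (k : ℕ) (A : Matrix (Fin p) (Fin p) ℝ) : ℝ :=
  ⨆ M : Models p k, opNorm (subm A M.1)

/-- `𝒟(k, v) = sup_{M ∈ 𝓜(k)} ‖v(M)‖₂`. -/
def Dnorm {p : ℕ} (k : ℕ) (v : Fin p → ℝ) : ℝ :=
  ⨆ M : Models p k, norm2 (subv v M.1)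

/-- `θ` has at most `k` nonzero coordinates. -/
def sparse {p : ℕ} (k : ℕ) (θ : Fin p → ℝ) : Prop := Set.ncard {j | θ j ≠ 0} ≤ k

/-- The minimal `k`-sparse eigenvalue
`Λ(k; A) = inf{θᵀAθ/‖θ‖₂² : θ ≠ 0, θ k-sparse}`. -/
def Lam {p : ℕ} (k : ℕ) (A : Matrix (Fin p) (Fin p) ℝ) : ℝ :=
  sInf {r | ∃ θ : Fin p → ℝ, θ ≠ 0 ∧ sparse k θ ∧ r = θ ⬝ᵥ A.mulVec θ / norm2 θ ^ 2}

/-- The linear regression map `β_M(Σ, Γ) = (Σ(M))⁻¹ Γ(M)`. -/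
def betaM {p : ℕ} (M : Finset (Fin p)) (S : Matrix (Fin p) (Fin p) ℝ) (G : Fin p → ℝ) :
    {x // x ∈ M} → ℝ := (subm S M)⁻¹.mulVec (subv G M)

/-- `S_{2,k}(Σ, Γ) = sup_{M ∈ 𝓜(k)} ‖β_M(Σ, Γ)‖₂`. -/
def S2k {p : ℕ} (k : ℕ) (S : Matrix (Fin p) (Fin p) ℝ) (G : Fin p → ℝ) : ℝ :=
  ⨆ M : Models p k, norm2 (betaM M.1 S G)

/-- `S_{1,k}(Σ, Γ) = sup_{M ∈ 𝓜(k)} ‖β_M(Σ, Γ)‖₁`. -/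
def S1k {p : ℕ} (k : ℕ) (S : Matrix (Fin p) (Fin p) ℝ) (G : Fin p → ℝ) : ℝ :=
  ⨆ M : Models p k, norm1 (betaM M.1 S G)

/-- The `k`-sparse Euclidean unit ball `Θ_k ⊆ ℝ^p`. -/
def Theta (p k : ℕ) : Set (Fin p → ℝ) := {θ | sparse k θ ∧ norm2 θ ≤ 1}

/-- The elementwise maximum norm `|||A|||_∞` of a matrix. -/
def normInfMat {p : ℕ} (A : Matrix (Fin p) (Fin p) ℝ) : ℝ :=
  ⨆ q : Fin p × Fin p, |A q.1 q.2|

/-- The supremum norm `‖v‖_∞` of a vector. -/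
def normInfVec {p : ℕ} (v : Fin p → ℝ) : ℝ := ⨆ j, |v j|


section Aux
variable {ι : Type*} [Fintype ι]


lemma norm2_nonneg (v : ι → ℝ) : 0 ≤ norm2 v := Real.sqrt_nonneg _

lemma norm2_sq (v : ι → ℝ) : norm2 v ^ 2 = ∑ i, (v i)^2 := by
  rw [norm2, Real.sq_sqrt]; positivity

lemma norm2_zero : norm2 (0 : ι → ℝ) = 0 := by simp [norm2]

lemma norm2_pos {v : ι → ℝ} (hv : v ≠ 0) : 0 < norm2 v := by
  rcases Function.ne_iff.1 hv with ⟨i, hi⟩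
  have h1 : (0:ℝ) < v i ^ 2 := lt_of_le_of_ne (sq_nonneg _) (Ne.symm (pow_ne_zero 2 hi))
  have h2 : v i ^ 2 ≤ ∑ j, (v j)^2 :=
    Finset.single_le_sum (f := fun j => (v j)^2) (fun j _ => sq_nonneg _) (Finset.mem_univ i)
  exact Real.sqrt_pos.2 (lt_of_lt_of_le h1 h2)

lemma norm1_nonneg (v : ι → ℝ) : 0 ≤ norm1 v := Finset.sum_nonneg fun i _ => abs_nonneg _

lemma dot_le_norm2 (x y : ι → ℝ) : x ⬝ᵥ y ≤ norm2 x * norm2 y := by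
  have h := Finset.sum_mul_sq_le_sq_mul_sq Finset.univ x y
  have h2 : x ⬝ᵥ y ≤ |x ⬝ᵥ y| := le_abs_self _
  refine h2.trans ?_
  rw [← Real.sqrt_sq_eq_abs, norm2, norm2, ← Real.sqrt_mul (by positivity)]
  exact Real.sqrt_le_sqrt (by simpa [dotProduct] using h)

lemma norm1_le_sqrt_card (v : ι → ℝ) :
    norm1 v ≤ Real.sqrt (Fintype.card ι) * norm2 v := by
  have h := Finset.sum_mul_sq_le_sq_mul_sq Finset.univ (fun _ : ι => (1:ℝ)) (fun i => |v i|)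
  simp only [one_mul, one_pow, sq_abs] at h
  have h0 : norm1 v = Real.sqrt ((∑ i : ι, |v i|)^2) := by
    rw [show ((∑ i : ι, |v i|)) = norm1 v from rfl, Real.sqrt_sq (norm1_nonneg v)]
  rw [h0, norm2, ← Real.sqrt_mul (by positivity)]
  refine Real.sqrt_le_sqrt ?_
  simpa [Finset.card_univ] using h

lemma norm2_le_of_forall {v : ι → ℝ} {c : ℝ} (hc : 0 ≤ c) (h : ∀ i, |v i| ≤ c) :
    norm2 v ≤ Real.sqrt (Fintype.card ι) * c := by
  have : norm2 v ≤ Real.sqrt (∑ _i : ι, c^2) := by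
    refine Real.sqrt_le_sqrt (Finset.sum_le_sum fun i _ => ?_)
    calc (v i)^2 = |v i|^2 := (sq_abs _).symm
    _ ≤ c^2 := by exact pow_le_pow_left₀ (abs_nonneg _) (h i) 2
  refine this.trans ?_
  rw [Finset.sum_const, Finset.card_univ, nsmul_eq_mul, Real.sqrt_mul (by positivity),
    Real.sqrt_sq hc]

lemma norm2_add_le (u v : ι → ℝ) : norm2 (u + v) ≤ norm2 u + norm2 v := by
  have key : ∀ w : ι → ℝ, norm2 w = ‖(EuclideanSpace.equiv ι ℝ).symm w‖ := by
    intro w; rw [EuclideanSpace.norm_eq, norm2]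
    congr 1; refine Finset.sum_congr rfl fun i _ => ?_
    simp [sq_abs]
  rw [key, key, key, map_add]
  exact norm_add_le _ _

lemma mulVec_entry_le {A : Matrix ι ι ℝ} {ε : ℝ} (hA : ∀ i j, |A i j| ≤ ε)
    (x : ι → ℝ) (i : ι) : |(A.mulVec x) i| ≤ ε * norm1 x := by
  calc |(A.mulVec x) i| ≤ ∑ j, |A i j * x j| :=
        Finset.abs_sum_le_sum_abs _ _
  _ ≤ ∑ j, ε * |x j| := by
        refine Finset.sum_le_sum fun j _ => ?_
        rw [abs_mul]
        exact mul_le_mul_of_nonneg_right (hA i j) (abs_nonneg _)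
  _ = ε * norm1 x := by rw [norm1, Finset.mul_sum]

lemma norm2_mulVec_le {A : Matrix ι ι ℝ} {ε : ℝ} (hε : 0 ≤ ε) (hA : ∀ i j, |A i j| ≤ ε)
    (x : ι → ℝ) : norm2 (A.mulVec x) ≤ Real.sqrt (Fintype.card ι) * (ε * norm1 x) :=
  norm2_le_of_forall (mul_nonneg hε (norm1_nonneg x)) (mulVec_entry_le hA x)

lemma quad_abs_le {A : Matrix ι ι ℝ} {ε : ℝ} (hA : ∀ i j, |A i j| ≤ ε)
    (x : ι → ℝ) : |x ⬝ᵥ A.mulVec x| ≤ ε * norm1 x ^ 2 := by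
  calc |x ⬝ᵥ A.mulVec x| ≤ ∑ i, |x i * (A.mulVec x) i| := Finset.abs_sum_le_sum_abs _ _
  _ ≤ ∑ i, |x i| * (ε * norm1 x) := by
        refine Finset.sum_le_sum fun i _ => ?_
        rw [abs_mul]
        exact mul_le_mul_of_nonneg_left (mulVec_entry_le hA x i) (abs_nonneg _)
  _ = ε * norm1 x ^ 2 := by rw [← Finset.sum_mul]; show norm1 x * _ = _; ring

end Aux

section Ext
variable {p : ℕ}

/-- Extension of a vector on a model `M` to `Fin p` by zero. -/
def extv (M : Finset (Fin p)) (θ : {x // x ∈ M} → ℝ) : Fin p → ℝ :=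
  fun j => if h : j ∈ M then θ ⟨j, h⟩ else 0

lemma sum_extv (M : Finset (Fin p)) (θ : {x // x ∈ M} → ℝ) (f : ℝ → ℝ) (hf : f 0 = 0) :
    ∑ j, f (extv M θ j) = ∑ i : {x // x ∈ M}, f (θ i) := by
  rw [← Finset.sum_subset (Finset.subset_univ M)
      (f := fun j => f (extv M θ j)) (fun x _ hx => by simp [extv, hx, hf]),
    ← Finset.sum_coe_sort M (fun j => f (extv M θ j))]
  refine Finset.sum_congr rfl fun i _ => ?_
  simp [extv, i.2]

lemma extv_ne_zero (M : Finset (Fin p)) {θ : {x // x ∈ M} → ℝ} (hθ : θ ≠ 0) :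
    extv M θ ≠ 0 := by
  intro h
  apply hθ
  funext i
  have := congrFun h i.1
  simpa [extv, i.2] using this

lemma sparse_extv {k : ℕ} (M : Finset (Fin p)) (hM : M.card ≤ k) (θ : {x // x ∈ M} → ℝ) :
    sparse k (extv M θ) := by
  have hsub : {j | extv M θ j ≠ 0} ⊆ (M : Set (Fin p)) := by
    intro j hj
    by_contra hjM
    exact hj (dif_neg (by simpa using hjM))
  calc Set.ncard {j | extv M θ j ≠ 0} ≤ (M : Set (Fin p)).ncard :=
        Set.ncard_le_ncard hsub M.finite_toSet
  _ = M.card := Set.ncard_coe_finset M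
  _ ≤ k := hM

lemma norm2_extv (M : Finset (Fin p)) (θ : {x // x ∈ M} → ℝ) :
    norm2 (extv M θ) = norm2 θ := by
  unfold norm2
  rw [sum_extv M θ (fun t => t ^ 2) (by norm_num)]

lemma mulVec_extv (Sig : Matrix (Fin p) (Fin p) ℝ) (M : Finset (Fin p))
    (θ : {x // x ∈ M} → ℝ) (i : {x // x ∈ M}) :
    (Sig.mulVec (extv M θ)) i.1 = ((subm Sig M).mulVec θ) i := by
  show ∑ j, Sig i.1 j * extv M θ j = ∑ j : {x // x ∈ M}, subm Sig M i j * θ j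
  rw [← Finset.sum_subset (Finset.subset_univ M)
      (f := fun j => Sig i.1 j * extv M θ j) (fun x _ hx => by simp [extv, hx]),
    ← Finset.sum_coe_sort M (fun j => Sig i.1 j * extv M θ j)]
  refine Finset.sum_congr rfl fun j _ => ?_
  simp [extv, j.2, subm]

lemma dot_extv (Sig : Matrix (Fin p) (Fin p) ℝ) (M : Finset (Fin p))
    (θ : {x // x ∈ M} → ℝ) :
    extv M θ ⬝ᵥ Sig.mulVec (extv M θ) = θ ⬝ᵥ (subm Sig M).mulVec θ := by
  show ∑ j, extv M θ j * (Sig.mulVec (extv M θ)) j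
      = ∑ i : {x // x ∈ M}, θ i * ((subm Sig M).mulVec θ) i
  rw [← Finset.sum_subset (Finset.subset_univ M)
      (f := fun j => extv M θ j * (Sig.mulVec (extv M θ)) j)
      (fun x _ hx => by simp [extv, hx]),
    ← Finset.sum_coe_sort M (fun j => extv M θ j * (Sig.mulVec (extv M θ)) j)]
  refine Finset.sum_congr rfl fun i _ => ?_
  rw [← mulVec_extv Sig M θ i]
  congr 1
  simp [extv, i.2]

lemma lam_le_quad {k : ℕ} {Sig : Matrix (Fin p) (Fin p) ℝ} (hLam : 0 < Lam k Sig)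
    {M : Finset (Fin p)} (hM : M.card ≤ k) (θ : {x // x ∈ M} → ℝ) :
    Lam k Sig * norm2 θ ^ 2 ≤ θ ⬝ᵥ (subm Sig M).mulVec θ := by
  by_cases hθ : θ = 0
  · subst hθ
    simp [norm2_zero, Matrix.mulVec_zero]
  · set S := {r | ∃ θ : Fin p → ℝ, θ ≠ 0 ∧ sparse k θ ∧ r = θ ⬝ᵥ Sig.mulVec θ / norm2 θ ^ 2}
      with hS
    have hbdd : BddBelow S := by
      by_contra h
      rw [show Lam k Sig = sInf S from rfl, Real.sInf_of_not_bddBelow h] at hLam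
      exact lt_irrefl _ hLam
    have hmem : (θ ⬝ᵥ (subm Sig M).mulVec θ) / norm2 θ ^ 2 ∈ S := by
      refine ⟨extv M θ, extv_ne_zero M hθ, sparse_extv M hM θ, ?_⟩
      rw [dot_extv, norm2_extv]
    have hle : Lam k Sig ≤ (θ ⬝ᵥ (subm Sig M).mulVec θ) / norm2 θ ^ 2 := csInf_le hbdd hmem
    have hpos : 0 < norm2 θ ^ 2 := pow_pos (norm2_pos hθ) 2
    calc Lam k Sig * norm2 θ ^ 2
        ≤ ((θ ⬝ᵥ (subm Sig M).mulVec θ) / norm2 θ ^ 2) * norm2 θ ^ 2 :=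
          mul_le_mul_of_nonneg_right hle hpos.le
    _ = θ ⬝ᵥ (subm Sig M).mulVec θ := div_mul_cancel₀ _ (ne_of_gt hpos)

end Ext

/-- Corollary of uniform `L₂`-consistency: if `k‖|Σ₁ − Σ₂|‖_∞ < Λ(k; Σ₂)` then
`sup_{M∈𝓜(k)} ‖β_M(Σ₁, Γ₁) − β_M(Σ₂, Γ₂)‖₂
  ≤ (k^{1/2}‖Γ₁ − Γ₂‖_∞ + k|||Σ₁ − Σ₂|||_∞ S_{2,k}(Σ₂, Γ₂)) / (Λ(k; Σ₂) − k|||Σ₁ − Σ₂|||_∞)`. -/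
theorem stmt3 {p : ℕ} (k : ℕ) (hk : 1 ≤ k)
    (Sig1 Sig2 : Matrix (Fin p) (Fin p) ℝ) (hS1 : Sig1.IsSymm) (hS2 : Sig2.IsSymm)
    (G1 G2 : Fin p → ℝ)
    (hLam : 0 < Lam k Sig2)
    (hRIP : (k : ℝ) * normInfMat (Sig1 - Sig2) < Lam k Sig2) :
    (⨆ M : Models p k, norm2 (betaM M.1 Sig1 G1 - betaM M.1 Sig2 G2)) ≤
      (Real.sqrt k * normInfVec (G1 - G2)
          + (k : ℝ) * normInfMat (Sig1 - Sig2) * S2k k Sig2 G2) /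
        (Lam k Sig2 - (k : ℝ) * normInfMat (Sig1 - Sig2)) := by
  set ε := normInfMat (Sig1 - Sig2) with hεdef
  have hε0 : 0 ≤ ε := Real.iSup_nonneg fun q => abs_nonneg _
  have hΓ0 : 0 ≤ normInfVec (G1 - G2) := Real.iSup_nonneg fun j => abs_nonneg _
  have hS2k0 : 0 ≤ S2k k Sig2 G2 := Real.iSup_nonneg fun M => norm2_nonneg _
  have hc_pos : (0:ℝ) < Lam k Sig2 - (k : ℝ) * ε := sub_pos.2 hRIP
  set c := Lam k Sig2 - (k : ℝ) * ε with hcdef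
  have hnum : 0 ≤ Real.sqrt k * normInfVec (G1 - G2) + (k : ℝ) * ε * S2k k Sig2 G2 := by
    have h1 : 0 ≤ Real.sqrt k * normInfVec (G1 - G2) :=
      mul_nonneg (Real.sqrt_nonneg _) hΓ0
    have h2 : 0 ≤ (k : ℝ) * ε * S2k k Sig2 G2 :=
      mul_nonneg (mul_nonneg (Nat.cast_nonneg _) hε0) hS2k0
    linarith
  refine Real.iSup_le (fun Mm => ?_) (div_nonneg hnum hc_pos.le)
  obtain ⟨M, hM1, hM2⟩ := Mm
  -- basic entry bounds
  have hEij : ∀ i j : Fin p, |Sig1 i j - Sig2 i j| ≤ ε := by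
    intro i j
    have := le_ciSup (f := fun q : Fin p × Fin p => |(Sig1 - Sig2) q.1 q.2|)
      (Set.Finite.bddAbove (Set.finite_range _)) ⟨i, j⟩
    simpa [Matrix.sub_apply, hεdef, normInfMat] using this
  have hGj : ∀ j : Fin p, |G1 j - G2 j| ≤ normInfVec (G1 - G2) := by
    intro j
    have := le_ciSup (f := fun j : Fin p => |(G1 - G2) j|)
      (Set.Finite.bddAbove (Set.finite_range _)) j
    simpa [normInfVec] using this
  set A1 := subm Sig1 M with hA1def
  set A2 := subm Sig2 M with hA2def
  have hcard : (Fintype.card {x // x ∈ M} : ℝ) = (M.card : ℝ) := by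
    rw [Fintype.card_coe]
  have hcard_le : (M.card : ℝ) ≤ (k : ℝ) := Nat.cast_le.2 hM2
  -- quadratic lower bound for A2
  have hquad2 : ∀ x : {x // x ∈ M} → ℝ, Lam k Sig2 * norm2 x ^ 2 ≤ x ⬝ᵥ A2.mulVec x :=
    fun x => lam_le_quad hLam hM2 x
  -- norm1 squared bound
  have hnorm1sq : ∀ x : {x // x ∈ M} → ℝ, norm1 x ^ 2 ≤ (k : ℝ) * norm2 x ^ 2 := by
    intro x
    have h := norm1_le_sqrt_card (x)
    have h2 : norm1 x ^ 2 ≤ (Real.sqrt (Fintype.card {x // x ∈ M}) * norm2 x) ^ 2 :=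
      pow_le_pow_left₀ (norm1_nonneg _) h 2
    calc norm1 x ^ 2 ≤ (Real.sqrt (Fintype.card {x // x ∈ M}) * norm2 x) ^ 2 := h2
    _ = (Fintype.card {x // x ∈ M} : ℝ) * norm2 x ^ 2 := by
        rw [mul_pow, Real.sq_sqrt (by positivity)]
    _ ≤ (k : ℝ) * norm2 x ^ 2 := by
        rw [hcard]
        exact mul_le_mul_of_nonneg_right hcard_le (sq_nonneg _)
  -- entrywise bounds on submatrices differences
  have hE1 : ∀ i j : {x // x ∈ M}, |(A1 - A2) i j| ≤ ε := by
    intro i j; simpa [hA1def, hA2def, subm, Matrix.sub_apply] using hEij i.1 j.1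
  have hE2 : ∀ i j : {x // x ∈ M}, |(A2 - A1) i j| ≤ ε := by
    intro i j
    have := hE1 i j
    rwa [Matrix.sub_apply, abs_sub_comm, ← Matrix.sub_apply] at this
  -- quadratic lower bound for A1
  have hquad1 : ∀ x : {x // x ∈ M} → ℝ, c * norm2 x ^ 2 ≤ x ⬝ᵥ A1.mulVec x := by
    intro x
    have hsplit : x ⬝ᵥ A1.mulVec x = x ⬝ᵥ A2.mulVec x + x ⬝ᵥ (A1 - A2).mulVec x := by
      rw [← dotProduct_add, ← Matrix.add_mulVec]
      rw [add_sub_cancel]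
    have habs : |x ⬝ᵥ (A1 - A2).mulVec x| ≤ ε * norm1 x ^ 2 := quad_abs_le hE1 x
    have h2 : x ⬝ᵥ (A1 - A2).mulVec x ≥ -(ε * ((k:ℝ) * norm2 x ^ 2)) := by
      have := neg_abs_le (x ⬝ᵥ (A1 - A2).mulVec x)
      have h3 : ε * norm1 x ^ 2 ≤ ε * ((k:ℝ) * norm2 x ^ 2) :=
        mul_le_mul_of_nonneg_left (hnorm1sq x) hε0
      linarith
    have h4 := hquad2 x
    rw [hsplit, hcdef]
    ring_nf
    ring_nf at h4 h2 ⊢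
    nlinarith [h4, h2]
  -- positive definiteness
  have hherm1 : A1.IsHermitian := by
    rw [Matrix.IsHermitian, Matrix.conjTranspose]
    ext i j
    simp [hA1def, subm, hS1.apply]
  have hherm2 : A2.IsHermitian := by
    rw [Matrix.IsHermitian, Matrix.conjTranspose]
    ext i j
    simp [hA2def, subm, hS2.apply]
  have hpd1 : A1.PosDef := by
    refine Matrix.PosDef.of_dotProduct_mulVec_pos hherm1 fun x hx => ?_
    have h1 := hquad1 x
    have h2 : (0:ℝ) < c * norm2 x ^ 2 :=
      mul_pos hc_pos (pow_pos (norm2_pos hx) 2)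
    simpa [star_trivial] using lt_of_lt_of_le h2 h1
  have hpd2 : A2.PosDef := by
    refine Matrix.PosDef.of_dotProduct_mulVec_pos hherm2 fun x hx => ?_
    have h1 := hquad2 x
    have h2 : (0:ℝ) < Lam k Sig2 * norm2 x ^ 2 :=
      mul_pos hLam (pow_pos (norm2_pos hx) 2)
    simpa [star_trivial] using lt_of_lt_of_le h2 h1
  have hdet1 : IsUnit A1.det := isUnit_iff_ne_zero.2 (ne_of_gt hpd1.det_pos)
  have hdet2 : IsUnit A2.det := isUnit_iff_ne_zero.2 (ne_of_gt hpd2.det_pos)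
  set β₁ := betaM M Sig1 G1 with hβ₁def
  set β₂ := betaM M Sig2 G2 with hβ₂def
  have hsolve1 : A1.mulVec β₁ = subv G1 M := by
    rw [hβ₁def, betaM, Matrix.mulVec_mulVec, ← hA1def, Matrix.mul_nonsing_inv _ hdet1,
      Matrix.one_mulVec]
  have hsolve2 : A2.mulVec β₂ = subv G2 M := by
    rw [hβ₂def, betaM, Matrix.mulVec_mulVec, ← hA2def, Matrix.mul_nonsing_inv _ hdet2,
      Matrix.one_mulVec]
  have hkey : A1.mulVec (β₁ - β₂) = subv (G1 - G2) M + (A2 - A1).mulVec β₂ := by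
    have hsubv : subv (G1 - G2) M = subv G1 M - subv G2 M := rfl
    rw [Matrix.mulVec_sub, hsolve1, hsubv, Matrix.sub_mulVec, hsolve2]
    abel
  set δ := β₁ - β₂ with hδdef
  -- bound norm2 of RHS
  have hnormg : norm2 (subv (G1 - G2) M) ≤ Real.sqrt k * normInfVec (G1 - G2) := by
    have h1 : norm2 (subv (G1 - G2) M)
        ≤ Real.sqrt (Fintype.card {x // x ∈ M}) * normInfVec (G1 - G2) := by
      refine norm2_le_of_forall hΓ0 fun i => ?_
      simpa [subv] using hGj i.1
    refine h1.trans (mul_le_mul_of_nonneg_right ?_ hΓ0)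
    rw [hcard]
    exact Real.sqrt_le_sqrt hcard_le
  have hβ₂S : norm2 β₂ ≤ S2k k Sig2 G2 := by
    have := le_ciSup (f := fun Mm : Models p k => norm2 (betaM Mm.1 Sig2 G2))
      (Set.Finite.bddAbove (Set.finite_range _)) ⟨M, hM1, hM2⟩
    simpa [hβ₂def, S2k] using this
  have hnormE : norm2 ((A2 - A1).mulVec β₂) ≤ (k : ℝ) * ε * S2k k Sig2 G2 := by
    have h1 := norm2_mulVec_le hε0 hE2 β₂
    have h2 : norm1 β₂ ≤ Real.sqrt (Fintype.card {x // x ∈ M}) * norm2 β₂ :=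
      norm1_le_sqrt_card β₂
    have hsq : Real.sqrt (Fintype.card {x // x ∈ M}) *
        Real.sqrt (Fintype.card {x // x ∈ M}) = (M.card : ℝ) := by
      rw [Real.mul_self_sqrt (by positivity), hcard]
    calc norm2 ((A2 - A1).mulVec β₂)
        ≤ Real.sqrt (Fintype.card {x // x ∈ M}) * (ε * norm1 β₂) := h1
    _ ≤ Real.sqrt (Fintype.card {x // x ∈ M}) *
          (ε * (Real.sqrt (Fintype.card {x // x ∈ M}) * norm2 β₂)) := by
        refine mul_le_mul_of_nonneg_left (mul_le_mul_of_nonneg_left h2 hε0)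
          (Real.sqrt_nonneg _)
    _ = (M.card : ℝ) * ε * norm2 β₂ := by rw [← hsq]; ring
    _ ≤ (k : ℝ) * ε * S2k k Sig2 G2 := by
        have hb2 : 0 ≤ norm2 β₂ := norm2_nonneg _
        have := mul_le_mul (mul_le_mul_of_nonneg_right hcard_le hε0) hβ₂S hb2
          (mul_nonneg (Nat.cast_nonneg _) hε0)
        exact this
  have hrhs : norm2 (A1.mulVec δ)
      ≤ Real.sqrt k * normInfVec (G1 - G2) + (k : ℝ) * ε * S2k k Sig2 G2 := by
    rw [hkey]
    exact (norm2_add_le _ _).trans (add_le_add hnormg hnormE)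
  -- Cauchy-Schwarz step
  have hmain : c * norm2 δ ≤ norm2 (A1.mulVec δ) := by
    rcases eq_or_lt_of_le (norm2_nonneg δ) with h0 | h0
    · rw [← h0, mul_zero]; exact norm2_nonneg _
    · have h1 : c * norm2 δ ^ 2 ≤ δ ⬝ᵥ A1.mulVec δ := hquad1 δ
      have h2 : δ ⬝ᵥ A1.mulVec δ ≤ norm2 δ * norm2 (A1.mulVec δ) := dot_le_norm2 _ _
      have h3 : (c * norm2 δ) * norm2 δ ≤ norm2 (A1.mulVec δ) * norm2 δ := by
        calc (c * norm2 δ) * norm2 δ = c * norm2 δ ^ 2 := by ring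
        _ ≤ norm2 δ * norm2 (A1.mulVec δ) := h1.trans h2
        _ = norm2 (A1.mulVec δ) * norm2 δ := by ring
      exact le_of_mul_le_mul_right h3 h0
  rw [le_div_iff₀ hc_pos]
  calc norm2 δ * c = c * norm2 δ := by ring
  _ ≤ norm2 (A1.mulVec δ) := hmain
  _ ≤ _ := hrhs
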